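/- arXiv:2010.13029 — 3 statements merged into one kernel-verified Lean document; each statement's English description precedes it below -/
import Mathlib

section
/- Let d be a positive integer and let W be a real d×d matrix. Denote by W∘W the entrywise (Hadamard) square of W, and by exp the matrix exponential. Then the directed graph G(W) on vertices {1,…,d} having an edge from i to j if and only if W_{ij} ≠ 0 is acyclic (i.e., W is the weighted adjacency matrix of a DAG) if and only if Tr(exp(W∘W)) = d. -/
open scoped Matrix

/-- The directed graph with edge relation `E` (on vertices `Fin d`) contains a directed cycle:
a nonempty sequence of vertices `v 0, v 1, …, v m` with `v m = v 0` and an edge from each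
`v t` to `v (t+1)`. -/
def HasDirectedCycle {d : ℕ} (E : Fin d → Fin d → Prop) : Prop :=
  ∃ (m : ℕ) (v : ℕ → Fin d), 1 ≤ m ∧ v m = v 0 ∧ ∀ t < m, E (v t) (v (t + 1))

section Aux

variable {d : ℕ} (A : Matrix (Fin d) (Fin d) ℝ)

lemma aux_pow_nonneg (hA : ∀ i j, 0 ≤ A i j) :
    ∀ (n : ℕ) (i j : Fin d), 0 ≤ (A ^ n) i j := by
  intro n
  induction n with
  | zero =>
    intro i j
    simp only [pow_zero, Matrix.one_apply]
    positivity
  | succ n ih =>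
    intro i j
    rw [pow_succ, Matrix.mul_apply]
    exact Finset.sum_nonneg fun k _ => mul_nonneg (ih i k) (hA k j)

lemma aux_walk_pos (hA : ∀ i j, 0 ≤ A i j) :
    ∀ (n : ℕ) (v : ℕ → Fin d), (∀ t < n, 0 < A (v t) (v (t + 1))) →
      0 < (A ^ n) (v 0) (v n) := by
  intro n
  induction n with
  | zero =>
    intro v _
    simp [Matrix.one_apply]
  | succ n ih =>
    intro v hv
    rw [pow_succ, Matrix.mul_apply]
    have h1 : 0 < (A ^ n) (v 0) (v n) * A (v n) (v (n + 1)) :=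
      mul_pos (ih v fun t ht => hv t (Nat.lt_succ_of_lt ht)) (hv n (Nat.lt_succ_self n))
    refine lt_of_lt_of_le h1 ?_
    refine Finset.single_le_sum (f := fun k => (A ^ n) (v 0) k * A k (v (n + 1))) ?_
      (Finset.mem_univ (v n))
    intro k _
    exact mul_nonneg (aux_pow_nonneg A hA n _ _) (hA _ _)

lemma aux_pow_ne_zero_walk :
    ∀ (n : ℕ) (i j : Fin d), (A ^ n) i j ≠ 0 →
      ∃ v : ℕ → Fin d, v 0 = i ∧ v n = j ∧ ∀ t < n, A (v t) (v (t + 1)) ≠ 0 := by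
  intro n
  induction n with
  | zero =>
    intro i j h
    simp only [pow_zero, Matrix.one_apply, ne_eq, ite_eq_right_iff, one_ne_zero] at h
    have hij : i = j := by by_contra hne; exact h fun h' => absurd h' hne
    exact ⟨fun _ => i, rfl, hij ▸ rfl, fun t ht => absurd ht (Nat.not_lt_zero t)⟩
  | succ n ih =>
    intro i j h
    rw [pow_succ, Matrix.mul_apply] at h
    obtain ⟨k, _, hk⟩ := Finset.exists_ne_zero_of_sum_ne_zero h
    have h1 : (A ^ n) i k ≠ 0 := left_ne_zero_of_mul hk
    have h2 : A k j ≠ 0 := right_ne_zero_of_mul hk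
    obtain ⟨v, hv0, hvn, hve⟩ := ih i k h1
    refine ⟨fun t => if t = n + 1 then j else v t, by simp [hv0], by simp, ?_⟩
    intro t ht
    rcases Nat.lt_or_ge t n with ht' | ht'
    · have h3 : t ≠ n + 1 := by omega
      have h4 : t + 1 ≠ n + 1 := by omega
      simpa [h3, h4, Nat.ne_of_lt ht'] using hve t ht'
    · have ht'' : t = n := by omega
      have h3 : n ≠ n + 1 := by omega
      simp only [ht'']
      simpa [h3, hvn] using h2

lemma aux_trace_exp (A : Matrix (Fin d) (Fin d) ℝ) :
    HasSum (fun n : ℕ => ((Nat.factorial n : ℝ))⁻¹ * (A ^ n).trace) ((NormedSpace.exp A).trace) := by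
  letI : SeminormedRing (Matrix (Fin d) (Fin d) ℝ) := Matrix.linftyOpSemiNormedRing
  letI : NormedRing (Matrix (Fin d) (Fin d) ℝ) := Matrix.linftyOpNormedRing
  letI : NormedAlgebra ℝ (Matrix (Fin d) (Fin d) ℝ) := Matrix.linftyOpNormedAlgebra
  have h := NormedSpace.exp_series_hasSum_exp' (𝕂 := ℝ) A
  have hcont : Continuous (Matrix.traceLinearMap (Fin d) ℝ ℝ) :=
    LinearMap.continuous_of_finiteDimensional _
  have h2 := h.map (Matrix.traceLinearMap (Fin d) ℝ ℝ).toAddMonoidHom hcont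
  simp [Function.comp_def, Matrix.trace_smul, smul_eq_mul] at h2
  exact h2

end Aux

/-- A real `d × d` matrix `W` is the weighted adjacency matrix of a DAG (i.e. the directed
graph with an edge `i → j` iff `W i j ≠ 0` is acyclic) if and only if
`Tr(exp (W ∘ W)) = d`, where `∘` is the Hadamard product. -/
theorem dag_iff_trace_exp_hadamard_sq_eq (d : ℕ) (hd : 0 < d)
    (W : Matrix (Fin d) (Fin d) ℝ) :
    ¬ HasDirectedCycle (fun i j => W i j ≠ 0) ↔
      (NormedSpace.exp (W ⊙ W)).trace = (d : ℝ) := by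
  set A := W ⊙ W with hAdef
  have hA : ∀ i j, 0 ≤ A i j := fun i j => by
    rw [hAdef, Matrix.hadamard_apply]; exact mul_self_nonneg _
  have hAedge : ∀ i j, A i j ≠ 0 ↔ W i j ≠ 0 := fun i j => by
    rw [hAdef, Matrix.hadamard_apply, ne_eq, mul_self_eq_zero]
  have hsum := aux_trace_exp A
  set g : ℕ → ℝ := fun n => ((Nat.factorial n : ℝ))⁻¹ * (A ^ n).trace with hg
  have hfac : ∀ n : ℕ, (0:ℝ) < ((Nat.factorial n : ℝ))⁻¹ := fun n =>
    inv_pos.mpr (by exact_mod_cast Nat.factorial_pos n)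
  have hg0 : g 0 = d := by simp [hg, Matrix.trace_one]
  have hgnonneg : ∀ n, 0 ≤ g n := fun n =>
    mul_nonneg (hfac n).le
      (Finset.sum_nonneg fun i _ => aux_pow_nonneg A hA n i i)
  constructor
  · intro hnc
    have hzero : ∀ n, n ≠ 0 → g n = 0 := by
      intro n hn
      have htr : (A ^ n).trace = 0 := by
        have hdiag : ∀ i, (A ^ n) i i = 0 := by
          intro i
          by_contra hne
          obtain ⟨v, hv0, hvn, hve⟩ := aux_pow_ne_zero_walk A n i i hne
          exact hnc ⟨n, v, Nat.one_le_iff_ne_zero.mpr hn, by rw [hv0, hvn],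
            fun t ht => (hAedge _ _).mp (hve t ht)⟩
        simp [Matrix.trace, hdiag]
      simp [hg, htr]
    rw [← hsum.tsum_eq, tsum_eq_single 0 (fun n hn => hzero n hn), hg0]
  · intro heq
    rintro ⟨m, v, hm, hvm, hve⟩
    have hgm : 0 < g m := by
      refine mul_pos (hfac m) ?_
      have hpos : 0 < (A ^ m) (v 0) (v 0) := by
        have h := aux_walk_pos A hA m v
          (fun t ht => lt_of_le_of_ne (hA _ _) (Ne.symm ((hAedge _ _).mpr (hve t ht))))
        rwa [hvm] at h
      calc (0:ℝ) < (A ^ m) (v 0) (v 0) := hpos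
        _ ≤ (A ^ m).trace :=
          Finset.single_le_sum (f := fun i => (A ^ m) i i)
            (fun i _ => aux_pow_nonneg A hA m i i) (Finset.mem_univ (v 0))
    have hle : g 0 + g m ≤ ∑' n, g n := by
      have h := Summable.sum_le_tsum ({0, m} : Finset ℕ) (fun n _ => hgnonneg n) hsum.summable
      rwa [Finset.sum_pair (by omega : (0:ℕ) ≠ m)] at h
    rw [hsum.tsum_eq, heq, hg0] at hle
    linarith
end

section
/- Let d be a positive integer and let A₀ be a real d×d matrix. The function A ↦ Tr(exp(A)) on real d×d matrices is Fréchet differentiable at A₀, with derivative the linear map H ↦ Tr(exp(A₀)·H). -/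
attribute [local instance] Matrix.normedAddCommGroup Matrix.normedSpace

section Aux

variable {d : ℕ}

local notation "M" => Matrix (Fin d) (Fin d) ℝ

/-- `H ↦ B * H * C` as a continuous linear map. -/
noncomputable def lrCLM (B C : M) : M →L[ℝ] M :=
  LinearMap.toContinuousLinearMap ((LinearMap.mulRight ℝ C).comp (LinearMap.mulLeft ℝ B))

noncomputable instance matCLMNormedAddCommGroup : NormedAddCommGroup (M →L[ℝ] ℝ) :=
  ContinuousLinearMap.toNormedAddCommGroup

noncomputable instance matCLMNormedSpace : NormedSpace ℝ (M →L[ℝ] ℝ) :=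
  ContinuousLinearMap.toNormedSpace

noncomputable instance matCLMCompleteSpace :
    @CompleteSpace (M →L[ℝ] ℝ) PseudoMetricSpace.toUniformSpace := by
  haveI : SequentialSpace M := (inferInstance : SequentialSpace (Fin d → Fin d → ℝ))
  exact ContinuousLinearMap.instCompleteSpace

@[simp] lemma lrCLM_apply (B C H : M) : lrCLM B C H = B * H * C := by
  simp [lrCLM, mul_assoc]

/-- trace as a continuous linear map -/
noncomputable def trCLM : M →L[ℝ] ℝ :=
  LinearMap.toContinuousLinearMap (Matrix.traceLinearMap (Fin d) ℝ ℝ)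

@[simp] lemma trCLM_apply (A : M) : trCLM A = A.trace := rfl

/-- `H ↦ (B * H).trace` as a continuous linear map -/
noncomputable def trMulCLM (B : M) : M →L[ℝ] ℝ :=
  trCLM.comp (LinearMap.toContinuousLinearMap (LinearMap.mulLeft ℝ B))

@[simp] lemma trMulCLM_apply (B H : M) : trMulCLM B H = (B * H).trace := rfl

/-- matrix multiplication as a continuous bilinear map -/
noncomputable def mulCLM : M →L[ℝ] M →L[ℝ] M :=
  LinearMap.toContinuousLinearMap
    { toFun := fun A => LinearMap.toContinuousLinearMap (LinearMap.mulLeft ℝ A)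
      map_add' := by intros; ext; simp [add_mul]
      map_smul' := by intros; ext; simp }

@[simp] lemma mulCLM_apply (A B : M) : mulCLM A B = A * B := rfl

lemma hasFDerivAt_pow_matrix (n : ℕ) (A : M) :
    HasFDerivAt (fun X : M => X ^ n)
      (∑ i ∈ Finset.range n, lrCLM (A ^ i) (A ^ (n - 1 - i))) A := by
  induction n with
  | zero => simpa using hasFDerivAt_const (1 : M) A
  | succ n ih =>
    have hbil : IsBoundedBilinearMap ℝ (fun p : M × M => mulCLM p.1 p.2) :=
      mulCLM.isBoundedBilinearMap
    have h : HasFDerivAt (fun X : M => mulCLM (X ^ n) X)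
        ((hbil.deriv (A ^ n, A)).comp
          ((∑ i ∈ Finset.range n, lrCLM (A ^ i) (A ^ (n - 1 - i))).prod
            (ContinuousLinearMap.id ℝ M))) A := by
      exact HasFDerivAt.comp (g := fun p : M × M => mulCLM p.1 p.2)
        (f := fun X : M => (X ^ n, X)) A (hbil.hasFDerivAt (A ^ n, A))
        (HasFDerivAt.prodMk ih (hasFDerivAt_id A))
    have hfun : (fun X : M => mulCLM (X ^ n) X) = fun X : M => X ^ (n + 1) := by
      funext X; rw [mulCLM_apply, pow_succ]
    rw [hfun] at h
    refine h.congr_fderiv (Eq.symm ?_)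
    refine ContinuousLinearMap.ext fun H => ?_
    simp only [ContinuousLinearMap.coe_sum', Finset.sum_apply, lrCLM_apply,
      Nat.add_sub_cancel, Finset.sum_range_succ, Nat.sub_self, pow_zero, mul_one,
      ContinuousLinearMap.coe_comp', Function.comp_apply, ContinuousLinearMap.prod_apply,
      ContinuousLinearMap.coe_id', id_eq, IsBoundedBilinearMap.deriv_apply, mulCLM_apply,
      ContinuousLinearMap.add_apply]
    rw [add_comm (∑ x ∈ Finset.range n, A ^ x * H * A ^ (n - x)) (A ^ n * H)]
    congr 1
    show _ = (∑ i ∈ Finset.range n, lrCLM (A ^ i) (A ^ (n - 1 - i))) H * A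
    simp only [ContinuousLinearMap.coe_sum', Finset.sum_apply, lrCLM_apply]
    rw [Finset.sum_mul]
    apply Finset.sum_congr rfl
    intro i hi
    rw [Finset.mem_range] at hi
    have hterm : A ^ i * H * A ^ (n - i) = A ^ i * H * A ^ (n - 1 - i) * A := by
      conv_rhs => rw [mul_assoc, ← pow_succ, show n - 1 - i + 1 = n - i from by omega]
    exact hterm

lemma trace_pow_deriv_eq (n : ℕ) (A H : M) :
    ((∑ i ∈ Finset.range n, lrCLM (A ^ i) (A ^ (n - 1 - i))) H).trace
      = (n : ℝ) * (A ^ (n - 1) * H).trace := by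
  simp only [ContinuousLinearMap.coe_sum', Finset.sum_apply, lrCLM_apply, Matrix.trace_sum]
  have key : ∀ i ∈ Finset.range n, (A ^ i * H * A ^ (n - 1 - i)).trace
      = (A ^ (n - 1) * H).trace := by
    intro i hi
    rw [Finset.mem_range] at hi
    have hexp : n - 1 - i + i = n - 1 := by omega
    rw [Matrix.trace_mul_comm, ← mul_assoc, ← pow_add, hexp]
  rw [Finset.sum_congr rfl key, Finset.sum_const, Finset.card_range, nsmul_eq_mul]

lemma hasFDerivAt_trace_pow (n : ℕ) (A : M) :
    HasFDerivAt (fun X : M => (X ^ n).trace)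
      ((n : ℝ) • trMulCLM (A ^ (n - 1))) A := by
  have h := (trCLM.hasFDerivAt (x := A ^ n)).comp A (hasFDerivAt_pow_matrix n A)
  refine h.congr_fderiv (Eq.symm ?_)
  ext H
  simp only [ContinuousLinearMap.smul_apply, trMulCLM_apply, ContinuousLinearMap.coe_comp',
    Function.comp_apply, trCLM_apply, smul_eq_mul]
  show _ = ((∑ i ∈ Finset.range n, lrCLM (A ^ i) (A ^ (n - 1 - i))) H).trace
  rw [trace_pow_deriv_eq]

lemma matrix_norm_mul_le (A B : M) : ‖A * B‖ ≤ d * (‖A‖ * ‖B‖) := by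
  have h0 : (0 : ℝ) ≤ d * (‖A‖ * ‖B‖) := by positivity
  rw [Matrix.norm_le_iff h0]
  intro i j
  calc ‖(A * B) i j‖ = ‖∑ k, A i k * B k j‖ := by rw [Matrix.mul_apply]
    _ ≤ ∑ k, ‖A i k * B k j‖ := norm_sum_le _ _
    _ ≤ ∑ _k : Fin d, ‖A‖ * ‖B‖ := by
        refine Finset.sum_le_sum fun k _ => ?_
        rw [norm_mul]
        exact mul_le_mul (Matrix.norm_entry_le_entrywise_sup_norm A)
          (Matrix.norm_entry_le_entrywise_sup_norm B) (norm_nonneg _) (norm_nonneg _)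
    _ = d * (‖A‖ * ‖B‖) := by simp [Finset.sum_const, mul_comm]

lemma matrix_norm_pow_le (A : M) (n : ℕ) : ‖A ^ n‖ ≤ (d * ‖A‖) ^ n := by
  induction n with
  | zero =>
    simp only [pow_zero]
    rw [Matrix.norm_le_iff zero_le_one]
    intro i j
    rw [Matrix.one_apply]
    split <;> simp
  | succ n ih =>
    calc ‖A ^ (n + 1)‖ = ‖A * A ^ n‖ := by rw [pow_succ']
      _ ≤ d * (‖A‖ * ‖A ^ n‖) := matrix_norm_mul_le _ _
      _ ≤ d * (‖A‖ * (d * ‖A‖) ^ n) :=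
          mul_le_mul_of_nonneg_left
            (mul_le_mul_of_nonneg_left ih (norm_nonneg A)) (Nat.cast_nonneg d)
      _ = (d * ‖A‖) ^ (n + 1) := by ring

lemma trMulCLM_norm_le (B : M) : ‖(trMulCLM B : M →L[ℝ] ℝ)‖ ≤ (d : ℝ) ^ 2 * ‖B‖ := by
  refine ContinuousLinearMap.opNorm_le_bound _ (by positivity) fun H => ?_
  calc ‖trMulCLM B H‖ = ‖(B * H).trace‖ := by rw [trMulCLM_apply]
    _ = ‖∑ i, (B * H) i i‖ := by rw [Matrix.trace]; rfl
    _ ≤ ∑ i, ‖(B * H) i i‖ := norm_sum_le _ _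
    _ ≤ ∑ _i : Fin d, ‖B * H‖ := Finset.sum_le_sum fun i _ =>
        Matrix.norm_entry_le_entrywise_sup_norm _
    _ = d * ‖B * H‖ := by simp [mul_comm]
    _ ≤ d * (d * (‖B‖ * ‖H‖)) :=
        mul_le_mul_of_nonneg_left (matrix_norm_mul_le _ _) (Nat.cast_nonneg d)
    _ = (d : ℝ) ^ 2 * ‖B‖ * ‖H‖ := by ring

lemma matrix_expSummable (A : M) :
    Summable fun n : ℕ => ((n.factorial : ℝ))⁻¹ • A ^ n := by
  refine Summable.of_norm_bounded (Real.summable_pow_div_factorial (d * ‖A‖)) fun n => ?_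
  rw [norm_smul, norm_inv, Real.norm_natCast, div_eq_inv_mul]
  gcongr
  exact matrix_norm_pow_le A n

end Aux

/-- The function `A ↦ Tr(exp A)` on real `d × d` matrices is Fréchet differentiable at any
matrix `A₀`, with derivative the (continuous) linear map `H ↦ Tr(exp A₀ * H)`. -/
theorem hasFDerivAt_trace_exp (d : ℕ) (hd : 0 < d) (A₀ : Matrix (Fin d) (Fin d) ℝ) :
    HasFDerivAt (fun A : Matrix (Fin d) (Fin d) ℝ => (NormedSpace.exp A).trace)
      (LinearMap.toContinuousLinearMap
        ((Matrix.traceLinearMap (Fin d) ℝ ℝ).comp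
          (LinearMap.mulLeft ℝ (NormedSpace.exp A₀)))) A₀ := by
  classical
  set R : ℝ := ‖A₀‖ + 1 with hR
  have hRpos : 0 < R := by positivity
  set s : Set (Matrix (Fin d) (Fin d) ℝ) := Metric.ball 0 R with hs
  set f : ℕ → Matrix (Fin d) (Fin d) ℝ → ℝ :=
    fun n A => ((n.factorial : ℝ))⁻¹ * (A ^ n).trace with hf_def
  set f' : ℕ → Matrix (Fin d) (Fin d) ℝ → Matrix (Fin d) (Fin d) ℝ →L[ℝ] ℝ :=
    fun n A => (((n.factorial : ℝ))⁻¹ * (n : ℝ)) • trMulCLM (A ^ (n - 1)) with hf'_def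
  set u : ℕ → ℝ :=
    fun n => (d : ℝ) ^ 2 * (((n.factorial : ℝ))⁻¹ * (n : ℝ) * ((d : ℝ) * R) ^ (n - 1))
    with hu_def
  have hfac_ne : ∀ n : ℕ, ((n.factorial : ℝ)) ≠ 0 :=
    fun n => Nat.cast_ne_zero.mpr n.factorial_ne_zero
  have hfacsucc : ∀ n : ℕ, (((n + 1).factorial : ℝ))⁻¹ * ((n : ℝ) + 1) = ((n.factorial : ℝ))⁻¹ := by
    intro n
    rw [Nat.factorial_succ]
    push_cast
    have hne1 : ((n : ℝ) + 1) ≠ 0 := by positivity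
    field_simp
  have hu : Summable u := by
    rw [← summable_nat_add_iff 1]
    have heq : (fun n => u (n + 1))
        = fun n => (d : ℝ) ^ 2 * (((d : ℝ) * R) ^ n / (n.factorial : ℝ)) := by
      funext n
      simp only [hu_def, Nat.add_sub_cancel]
      rw [Nat.cast_add, Nat.cast_one, hfacsucc n, div_eq_inv_mul]
    rw [heq]
    exact (Real.summable_pow_div_factorial ((d : ℝ) * R)).mul_left _
  have hfderiv : ∀ (n : ℕ) (A : Matrix (Fin d) (Fin d) ℝ), HasFDerivAt (f n) (f' n A) A := by
    intro n A
    have h := (hasFDerivAt_trace_pow n A).const_smul ((n.factorial : ℝ))⁻¹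
    replace h := h.congr_fderiv (g' := f' n A) (by ext H; exact smul_smul ((n.factorial : ℝ))⁻¹ (n : ℝ) (trMulCLM (A ^ (n - 1)) H))
    simpa only [hf_def, hf'_def, smul_eq_mul, Pi.smul_def] using h
  have hbound : ∀ (n : ℕ) (A : Matrix (Fin d) (Fin d) ℝ), A ∈ s → ‖f' n A‖ ≤ u n := by
    intro n A hA
    rw [hs, Metric.mem_ball, dist_zero_right] at hA
    have hAR : ‖A‖ ≤ R := le_of_lt hA
    have h1 : ‖f' n A‖ = (((n.factorial : ℝ))⁻¹ * (n : ℝ)) * ‖trMulCLM (A ^ (n - 1))‖ := by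
      have hns := norm_smul ((((n.factorial : ℝ))⁻¹ * (n : ℝ)))
        (trMulCLM (A ^ (n - 1)) : Matrix (Fin d) (Fin d) ℝ →L[ℝ] ℝ)
      rw [Real.norm_eq_abs, abs_of_nonneg (by positivity)] at hns
      exact hns
    rw [h1]
    have h2 : ‖A ^ (n - 1)‖ ≤ ((d : ℝ) * R) ^ (n - 1) := by
      refine (matrix_norm_pow_le A (n - 1)).trans
        (pow_le_pow_left₀ (by positivity)
          (mul_le_mul_of_nonneg_left hAR (Nat.cast_nonneg d)) _)
    calc (((n.factorial : ℝ))⁻¹ * (n : ℝ)) * ‖trMulCLM (A ^ (n - 1))‖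
        ≤ (((n.factorial : ℝ))⁻¹ * (n : ℝ)) * ((d : ℝ) ^ 2 * ‖A ^ (n - 1)‖) := by
          refine mul_le_mul_of_nonneg_left (trMulCLM_norm_le _) (by positivity)
      _ ≤ (((n.factorial : ℝ))⁻¹ * (n : ℝ)) * ((d : ℝ) ^ 2 * ((d : ℝ) * R) ^ (n - 1)) := by
          refine mul_le_mul_of_nonneg_left
            (mul_le_mul_of_nonneg_left h2 (by positivity)) (by positivity)
      _ = u n := by rw [hu_def]; ring
  have h0s : (0 : Matrix (Fin d) (Fin d) ℝ) ∈ s := by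
    simp [hs, hRpos]
  have hA₀s : A₀ ∈ s := by
    simp only [hs, Metric.mem_ball, dist_zero_right, hR]
    linarith
  have hf0 : Summable fun n => f n (0 : Matrix (Fin d) (Fin d) ℝ) := by
    refine summable_of_ne_finset_zero (s := {0}) fun n hn => ?_
    simp only [Finset.mem_singleton] at hn
    simp [hf_def, zero_pow hn]
  have key := hasFDerivAt_tsum_of_isPreconnected hu Metric.isOpen_ball
    (convex_ball (0 : Matrix (Fin d) (Fin d) ℝ) R).isPreconnected
    (fun n x _ => hfderiv n x) hbound h0s hf0 hA₀s
  have hfun : (fun A : Matrix (Fin d) (Fin d) ℝ => (NormedSpace.exp A).trace)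
      = fun A => ∑' n, f n A := by
    funext A
    rw [NormedSpace.exp_eq_tsum (𝕂 := ℝ)]
    conv_lhs => rw [← trCLM_apply, trCLM.map_tsum (matrix_expSummable A)]
    refine tsum_congr fun n => ?_
    simp [hf_def, smul_eq_mul]
  have hf'sum : Summable fun n => f' n A₀ :=
    Summable.of_norm (Summable.of_nonneg_of_le (fun n => norm_nonneg _)
      (fun n => hbound n A₀ hA₀s) hu)
  have hderiv : (∑' n, f' n A₀)
      = LinearMap.toContinuousLinearMap
        ((Matrix.traceLinearMap (Fin d) ℝ ℝ).comp
          (LinearMap.mulLeft ℝ (NormedSpace.exp A₀))) := by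
    ext H
    have hHsum := ((ContinuousLinearMap.apply ℝ ℝ H).hasSum hf'sum.hasSum)
    have hL : (∑' n, f' n A₀) H = ∑' n, f' n A₀ H := hHsum.tsum_eq.symm
    rw [hL]
    have hmulR : (NormedSpace.exp A₀ * H).trace
        = ∑' n, ((n.factorial : ℝ))⁻¹ * (A₀ ^ n * H).trace := by
      set T : Matrix (Fin d) (Fin d) ℝ →L[ℝ] ℝ :=
        trCLM.comp (LinearMap.toContinuousLinearMap (LinearMap.mulRight ℝ H)) with hT
      have hTapp : ∀ B : Matrix (Fin d) (Fin d) ℝ, T B = (B * H).trace := fun B => rfl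
      conv_lhs => rw [← hTapp, NormedSpace.exp_eq_tsum (𝕂 := ℝ), T.map_tsum (matrix_expSummable A₀)]
      refine tsum_congr fun n => ?_
      rw [map_smul, hTapp, smul_eq_mul]
    have hsumH : Summable fun n => f' n A₀ H := hHsum.summable
    have hshift : ∑' n, f' n A₀ H
        = ∑' n, ((n.factorial : ℝ))⁻¹ * (A₀ ^ n * H).trace := by
      rw [Summable.tsum_eq_zero_add hsumH]
      have h0 : f' 0 A₀ H = 0 := by simp [hf'_def]
      rw [h0, zero_add]
      refine tsum_congr fun n => ?_
      have hterm : f' (n + 1) A₀ H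
          = ((((n + 1).factorial : ℝ))⁻¹ * ((n : ℝ) + 1)) * (A₀ ^ n * H).trace := by
        simp only [hf'_def, ContinuousLinearMap.smul_apply, trMulCLM_apply,
          Nat.add_sub_cancel, smul_eq_mul]
        push_cast
        ring
      rw [hterm, hfacsucc n]
    rw [hshift, ← hmulR]
    rfl
  rw [hfun, ← hderiv]
  exact key
end

section
/- Let d be a positive integer and define h : ℝ^{d×d} → ℝ by h(W) = Tr(exp(W∘W)) − d, where W∘W is the Hadamard square of W. Then h is Fréchet differentiable at every W, and its derivative at W is the linear map V ↦ Tr(G(W)ᵀ · V) where G(W) = 2 (exp(W∘W))ᵀ ∘ W; equivalently, the gradient of h with respect to the Frobenius inner product ⟨A,B⟩ = Tr(AᵀB) is ∇h(W) = 2 (exp(W∘W))ᵀ ∘ W. -/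
open scoped Matrix

attribute [local instance] Matrix.normedAddCommGroup Matrix.normedSpace

namespace TraceExpHadamardAux

open scoped Nat

variable {d : ℕ}

local notation "E" => Matrix (Fin d) (Fin d) ℝ

@[reducible] noncomputable def topE (d : ℕ) : TopologicalSpace (Matrix (Fin d) (Fin d) ℝ) :=
  PseudoMetricSpace.toUniformSpace.toTopologicalSpace

lemma topE_ring (d : ℕ) : @IsTopologicalRing (Matrix (Fin d) (Fin d) ℝ) (topE d) _ :=
  Matrix.topologicalRing

@[reducible] noncomputable def modE (d : ℕ) : Module ℝ (Matrix (Fin d) (Fin d) ℝ) :=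
  NormedSpace.toModule

attribute [local instance] topE topE_ring modE

noncomputable def traceCLM (d : ℕ) : Matrix (Fin d) (Fin d) ℝ →L[ℝ] ℝ :=
  LinearMap.toContinuousLinearMap (Matrix.traceLinearMap (Fin d) ℝ ℝ)

@[simp] lemma traceCLM_apply (A : E) : traceCLM d A = A.trace := rfl

noncomputable def mulCLM (d : ℕ) :
    Matrix (Fin d) (Fin d) ℝ →L[ℝ] Matrix (Fin d) (Fin d) ℝ →L[ℝ] Matrix (Fin d) (Fin d) ℝ :=
  LinearMap.toContinuousLinearMap
    { toFun := fun B => LinearMap.toContinuousLinearMap (LinearMap.mulLeft ℝ B)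
      map_add' := by intro B C; ext H; simp [add_mul]
      map_smul' := by intro c B; ext H; simp [smul_mul_assoc] }

@[simp] lemma mulCLM_apply (A B : E) : mulCLM d A B = A * B := rfl

noncomputable def TL (d : ℕ) :
    Matrix (Fin d) (Fin d) ℝ →L[ℝ] (Matrix (Fin d) (Fin d) ℝ →L[ℝ] ℝ) :=
  LinearMap.toContinuousLinearMap
    { toFun := fun B => (traceCLM d).comp (mulCLM d B)
      map_add' := by intro B C; ext H; simp [add_mul]
      map_smul' := by intro c B; ext H; simp [smul_mul_assoc] }

@[simp] lemma TL_apply (B H : E) : TL d B H = (B * H).trace := rfl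

noncomputable def hadCLM (d : ℕ) :
    Matrix (Fin d) (Fin d) ℝ →L[ℝ] Matrix (Fin d) (Fin d) ℝ →L[ℝ] Matrix (Fin d) (Fin d) ℝ :=
  LinearMap.toContinuousLinearMap
    { toFun := fun B => LinearMap.toContinuousLinearMap
        { toFun := fun C => B ⊙ C
          map_add' := fun C D => by ext i j; simp [Matrix.hadamard, mul_add]
          map_smul' := fun c C => by ext i j; simp [Matrix.hadamard]; ring }
      map_add' := by
        intro B C; ext H i j
        simp [Matrix.hadamard]; ring
      map_smul' := by
        intro c B; ext H i j
        simp [Matrix.hadamard]; ring }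

@[simp] lemma hadCLM_apply (A B : E) : hadCLM d A B = A ⊙ B := rfl

lemma hasFDerivAt_pow' (n : ℕ) (A : E) :
    HasFDerivAt (fun X : E => X ^ n)
      (∑ i ∈ Finset.range n, (mulCLM d (A ^ i)).comp ((mulCLM d).flip (A ^ (n - 1 - i)))) A := by
  induction n with
  | zero => simpa using hasFDerivAt_const (1 : E) A
  | succ n ih =>
    have hc : HasFDerivAt (fun X : E => mulCLM d (X ^ n))
        ((mulCLM d).comp
          (∑ i ∈ Finset.range n, (mulCLM d (A ^ i)).comp ((mulCLM d).flip (A ^ (n - 1 - i))))) A :=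
      (mulCLM d).hasFDerivAt.comp A ih
    have h := hc.clm_apply (hasFDerivAt_id A)
    simp only [id_eq] at h
    have hfun : (fun X : E => mulCLM d (X ^ n) X) = fun X : E => X ^ (n + 1) := by
      funext X; simp [pow_succ]
    rw [hfun] at h
    refine h.congr_fderiv (Eq.symm ?_)
    refine ContinuousLinearMap.ext fun H => ?_
    simp only [ContinuousLinearMap.add_apply, ContinuousLinearMap.comp_apply,
      ContinuousLinearMap.sum_apply, ContinuousLinearMap.flip_apply,
      ContinuousLinearMap.coe_id', id_eq, mulCLM_apply, Finset.sum_apply]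
    rw [Finset.sum_range_succ]
    have h1 : ∀ i ∈ Finset.range n,
        A ^ i * (H * A ^ (n + 1 - 1 - i)) = (A ^ i * (H * A ^ (n - 1 - i))) * A := by
      intro i hi
      rw [Finset.mem_range] at hi
      have he : n + 1 - 1 - i = (n - 1 - i) + 1 := by omega
      rw [he, pow_succ]
      simp only [mul_assoc]
    rw [Finset.sum_congr rfl h1, ← Finset.sum_mul]
    have h0 : n + 1 - 1 - n = 0 := by omega
    rw [h0, pow_zero, mul_one, add_comm]

lemma hasFDerivAt_trace_pow (n : ℕ) (A : E) :
    HasFDerivAt (fun X : E => (X ^ (n + 1)).trace) (((n : ℝ) + 1) • TL d (A ^ n)) A := by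
  have h := (traceCLM d).hasFDerivAt.comp A (hasFDerivAt_pow' (n + 1) A)
  refine h.congr_fderiv (Eq.symm ?_)
  ext H
  simp only [ContinuousLinearMap.smul_apply, TL_apply, ContinuousLinearMap.comp_apply,
    ContinuousLinearMap.sum_apply, ContinuousLinearMap.flip_apply, mulCLM_apply,
    traceCLM_apply, Finset.sum_apply]
  rw [Matrix.trace_sum]
  have : ∀ i ∈ Finset.range (n + 1),
      (A ^ i * (H * A ^ (n + 1 - 1 - i))).trace = (A ^ n * H).trace := by
    intro i hi
    rw [Finset.mem_range] at hi
    rw [← mul_assoc, Matrix.trace_mul_cycle, ← pow_add]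
    congr 3
    omega
  rw [Finset.sum_congr rfl this, Finset.sum_const, Finset.card_range, nsmul_eq_mul,
    smul_eq_mul]
  push_cast
  ring

lemma entry_mul_le (A B : E) (i j : Fin d) : ‖(A * B) i j‖ ≤ (d : ℝ) * ‖A‖ * ‖B‖ := by
  rw [Matrix.mul_apply]
  calc ‖∑ k, A i k * B k j‖ ≤ ∑ k, ‖A i k * B k j‖ := norm_sum_le _ _
    _ ≤ ∑ _k : Fin d, ‖A‖ * ‖B‖ := by
        refine Finset.sum_le_sum fun k _ => ?_
        rw [norm_mul]
        exact mul_le_mul (Matrix.norm_entry_le_entrywise_sup_norm A)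
          (Matrix.norm_entry_le_entrywise_sup_norm B) (norm_nonneg _) (norm_nonneg _)
    _ = (d : ℝ) * ‖A‖ * ‖B‖ := by
        rw [Finset.sum_const, Finset.card_univ, Fintype.card_fin, nsmul_eq_mul, mul_assoc]

lemma norm_mul_le' (A B : E) : ‖A * B‖ ≤ (d : ℝ) * ‖A‖ * ‖B‖ := by
  rw [Matrix.norm_le_iff (by positivity)]
  exact fun i j => entry_mul_le A B i j

lemma norm_one_le : ‖(1 : E)‖ ≤ 1 := by
  rw [Matrix.norm_le_iff zero_le_one]
  intro i j
  rw [Matrix.one_apply]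
  split <;> simp

lemma norm_pow_le (X : E) : ∀ m : ℕ, ‖X ^ m‖ ≤ ((d : ℝ) * ‖X‖) ^ m
  | 0 => by simpa using norm_one_le
  | (m + 1) => by
    calc ‖X ^ (m + 1)‖ = ‖X ^ m * X‖ := by rw [pow_succ]
      _ ≤ (d : ℝ) * ‖X ^ m‖ * ‖X‖ := norm_mul_le' _ _
      _ ≤ (d : ℝ) * ((d : ℝ) * ‖X‖) ^ m * ‖X‖ :=
          mul_le_mul_of_nonneg_right
            (mul_le_mul_of_nonneg_left (norm_pow_le X m) (Nat.cast_nonneg d)) (norm_nonneg X)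
      _ = ((d : ℝ) * ‖X‖) ^ (m + 1) := by ring

lemma norm_trace_le (A : E) : ‖A.trace‖ ≤ (d : ℝ) * ‖A‖ := by
  rw [Matrix.trace]
  calc ‖∑ i, A.diag i‖ ≤ ∑ i, ‖A.diag i‖ := norm_sum_le _ _
    _ ≤ ∑ _i : Fin d, ‖A‖ := Finset.sum_le_sum fun i _ =>
        Matrix.norm_entry_le_entrywise_sup_norm A
    _ = (d : ℝ) * ‖A‖ := by
        rw [Finset.sum_const, Finset.card_univ, Fintype.card_fin, nsmul_eq_mul]

lemma norm_TL_le (B : E) : ‖TL d B‖ ≤ (d : ℝ) ^ 2 * ‖B‖ := by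
  refine ContinuousLinearMap.opNorm_le_bound _ (by positivity) fun H => ?_
  rw [TL_apply]
  calc ‖(B * H).trace‖ ≤ (d : ℝ) * ‖B * H‖ := norm_trace_le _
    _ ≤ (d : ℝ) * ((d : ℝ) * ‖B‖ * ‖H‖) :=
        mul_le_mul_of_nonneg_left (norm_mul_le' B H) (Nat.cast_nonneg d)
    _ = (d : ℝ) ^ 2 * ‖B‖ * ‖H‖ := by ring

lemma summable_exp_terms (X : E) : Summable fun n : ℕ => ((n ! : ℝ))⁻¹ • X ^ n := by
  refine Summable.of_norm_bounded (g := fun n => ((d : ℝ) * ‖X‖) ^ n / n !)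
    (Real.summable_pow_div_factorial _) fun n => ?_
  show ‖((n ! : ℝ))⁻¹ • X ^ n‖ ≤ ((d : ℝ) * ‖X‖) ^ n / (n ! : ℝ)
  have hns := norm_smul (α := ℝ) (β := Matrix (Fin d) (Fin d) ℝ) ((n ! : ℝ))⁻¹ (X ^ n)
  rw [hns, Real.norm_eq_abs, abs_inv, Nat.abs_cast, div_eq_inv_mul]
  exact mul_le_mul_of_nonneg_left (norm_pow_le X n) (by positivity)

lemma trace_exp_eq_tsum (X : E) :
    (NormedSpace.exp X).trace = ∑' n : ℕ, ((n ! : ℝ))⁻¹ * (X ^ n).trace := by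
  rw [NormedSpace.exp_eq_tsum (𝕂 := ℝ)]
  have := (traceCLM d).map_tsum (summable_exp_terms X)
  simpa using this

lemma hasFDerivAt_trace_exp (A : E) :
    HasFDerivAt (fun X : E => (NormedSpace.exp X).trace) (TL d (NormedSpace.exp A)) A := by
  set R : ℝ := ‖A‖ + 1 with hR
  have hR0 : (0 : ℝ) ≤ R := by positivity
  set f : ℕ → E → ℝ := fun n X => ((n ! : ℝ))⁻¹ * (X ^ n).trace with hf_def
  set f' : ℕ → E → (E →L[ℝ] ℝ) :=
    fun n X => Nat.casesOn n 0 (fun m => ((m ! : ℝ))⁻¹ • TL d (X ^ m)) with hf'_def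
  set u : ℕ → ℝ := fun n =>
    Nat.casesOn n 0 (fun m => (d : ℝ) ^ 2 * (((d : ℝ) * R) ^ m / m !)) with hu_def
  have hA : A ∈ Metric.ball (0 : E) R := by
    rw [Metric.mem_ball, dist_zero_right]
    simp [hR]
  have hu : Summable u := by
    have h1 : Summable fun m : ℕ => (d : ℝ) ^ 2 * (((d : ℝ) * R) ^ m / m !) :=
      (Real.summable_pow_div_factorial _).mul_left _
    exact (summable_nat_add_iff 1).1 h1
  have hf : ∀ (n : ℕ) (X : E), X ∈ Metric.ball (0 : E) R → HasFDerivAt (f n) (f' n X) X := by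
    intro n X _
    match n with
    | 0 =>
      have hconst : f 0 = fun _ : E => (1 : E).trace := by
        funext Y; simp [hf_def]
      rw [hconst]
      exact hasFDerivAt_const _ _
    | (m + 1) =>
      have h := (hasFDerivAt_trace_pow m X).const_mul (((m + 1)! : ℝ))⁻¹
      have he : (((m + 1)! : ℝ))⁻¹ • (((m : ℝ) + 1) • TL d (X ^ m))
          = ((m ! : ℝ))⁻¹ • TL d (X ^ m) := by
        rw [smul_smul]
        congr 1
        rw [Nat.factorial_succ]
        have hm : (m ! : ℝ) ≠ 0 := Nat.cast_ne_zero.2 (Nat.factorial_ne_zero m)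
        have hm1 : ((m : ℝ) + 1) ≠ 0 := by positivity
        push_cast
        field_simp
      rw [he] at h
      exact h
  have hf' : ∀ (n : ℕ) (X : E), X ∈ Metric.ball (0 : E) R → ‖f' n X‖ ≤ u n := by
    intro n X hX
    rw [Metric.mem_ball, dist_zero_right] at hX
    match n with
    | 0 => simp [hf'_def, hu_def]
    | (m + 1) =>
      have hXR : ‖X‖ ≤ R := le_of_lt hX
      show ‖((m ! : ℝ))⁻¹ • TL d (X ^ m)‖ ≤ (d : ℝ) ^ 2 * (((d : ℝ) * R) ^ m / m !)
      have hns := norm_smul (α := ℝ) (β := Matrix (Fin d) (Fin d) ℝ →L[ℝ] ℝ)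
        ((m ! : ℝ))⁻¹ (TL d (X ^ m))
      rw [hns, Real.norm_eq_abs, abs_inv, Nat.abs_cast]
      calc ((m ! : ℝ))⁻¹ * ‖TL d (X ^ m)‖
          ≤ ((m ! : ℝ))⁻¹ * ((d : ℝ) ^ 2 * ‖X ^ m‖) :=
            mul_le_mul_of_nonneg_left (norm_TL_le _) (by positivity)
        _ ≤ ((m ! : ℝ))⁻¹ * ((d : ℝ) ^ 2 * ((d : ℝ) * ‖X‖) ^ m) := by
            refine mul_le_mul_of_nonneg_left
              (mul_le_mul_of_nonneg_left (norm_pow_le X m) (by positivity)) (by positivity)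
        _ ≤ ((m ! : ℝ))⁻¹ * ((d : ℝ) ^ 2 * ((d : ℝ) * R) ^ m) := by
            refine mul_le_mul_of_nonneg_left
              (mul_le_mul_of_nonneg_left (pow_le_pow_left₀ (by positivity)
                (mul_le_mul_of_nonneg_left hXR (Nat.cast_nonneg d)) m) (by positivity))
              (by positivity)
        _ = (d : ℝ) ^ 2 * (((d : ℝ) * R) ^ m / m !) := by
            field_simp
  have hf0 : Summable fun n => f n 0 := by
    refine summable_of_ne_finset_zero (s := {0}) fun n hn => ?_
    simp only [Finset.mem_singleton] at hn
    simp [hf_def, zero_pow hn]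
  have h0mem : (0 : E) ∈ Metric.ball (0 : E) R :=
    Metric.mem_ball_self (by rw [hR]; positivity)
  have key := hasFDerivAt_tsum_of_isPreconnected hu Metric.isOpen_ball
    ((convex_ball (0 : E) R).isPreconnected) hf hf' h0mem hf0 hA
  have hfun : (fun X : E => ∑' n, f n X) = fun X : E => (NormedSpace.exp X).trace := by
    funext X
    rw [trace_exp_eq_tsum]
  rw [hfun] at key
  have hderiv : (∑' n, f' n A) = TL d (NormedSpace.exp A) := by
    have hS1 : Summable fun n : ℕ => TL d (((n ! : ℝ))⁻¹ • A ^ n) :=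
      (summable_exp_terms A).map (TL d).toLinearMap.toAddMonoidHom (TL d).continuous
    have heq : (fun n : ℕ => TL d (((n ! : ℝ))⁻¹ • A ^ n))
        = fun n : ℕ => f' (n + 1) A := by
      funext n
      simp [hf'_def]
    have hS2 : Summable fun n : ℕ => f' (n + 1) A := heq ▸ hS1
    have hS : Summable fun n : ℕ => f' n A := (summable_nat_add_iff 1).1 hS2
    rw [hS.tsum_eq_zero_add]
    have h0 : f' 0 A = 0 := rfl
    rw [h0, zero_add, ← heq, ← (TL d).map_tsum (summable_exp_terms A),
      NormedSpace.exp_eq_tsum (𝕂 := ℝ)]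
  rw [hderiv] at key
  exact key

end TraceExpHadamardAux

/-- The function `h(W) = Tr(exp (W ∘ W)) − d` on real `d × d` matrices (with `∘` the Hadamard
product) is Fréchet differentiable at every `W`, with derivative the (continuous) linear map
`V ↦ Tr(G(W)ᵀ * V)`, where `G(W) = 2 (exp (W ∘ W))ᵀ ∘ W`; equivalently, the gradient of `h`
with respect to the Frobenius inner product `⟨A, B⟩ = Tr(Aᵀ * B)` is
`∇h(W) = 2 (exp (W ∘ W))ᵀ ∘ W`. -/
theorem hasFDerivAt_trace_exp_hadamard_sq (d : ℕ) (hd : 0 < d)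
    (W : Matrix (Fin d) (Fin d) ℝ) :
    HasFDerivAt
      (fun W : Matrix (Fin d) (Fin d) ℝ =>
        (NormedSpace.exp (W ⊙ W)).trace - (d : ℝ))
      (LinearMap.toContinuousLinearMap
        ((Matrix.traceLinearMap (Fin d) ℝ ℝ).comp
          (LinearMap.mulLeft ℝ ((2 : ℝ) • ((NormedSpace.exp (W ⊙ W))ᵀ ⊙ W))ᵀ))) W := by
  open TraceExpHadamardAux in

  have hq0 := ((hadCLM d).hasFDerivAt (x := W)).clm_apply (hasFDerivAt_id W)
  simp only [id_eq] at hq0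
  have hqfun : (fun y : Matrix (Fin d) (Fin d) ℝ => hadCLM d y y)
      = fun y : Matrix (Fin d) (Fin d) ℝ => y ⊙ y := by
    funext y; simp
  rw [hqfun] at hq0
  have key := ((hasFDerivAt_trace_exp (W ⊙ W)).comp (f := fun y => y ⊙ y) W hq0).sub_const (d : ℝ)
  refine key.congr_fderiv (Eq.symm ?_)
  refine ContinuousLinearMap.ext fun V => ?_
  change _ = TraceExpHadamardAux.TL d (NormedSpace.exp (W ⊙ W))
    (TraceExpHadamardAux.hadCLM d W V + TraceExpHadamardAux.hadCLM d V W)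
  simp only [ContinuousLinearMap.comp_apply, ContinuousLinearMap.add_apply,
    ContinuousLinearMap.flip_apply, ContinuousLinearMap.coe_id', id_eq,
    hadCLM_apply, TL_apply, LinearMap.coe_toContinuousLinearMap', LinearMap.comp_apply,
    LinearMap.mulLeft_apply, Matrix.traceLinearMap_apply]
  rw [Matrix.trace, Matrix.trace]
  simp only [Matrix.diag, Matrix.mul_apply, Matrix.transpose_apply, Matrix.smul_apply,
    Matrix.hadamard_apply, Matrix.add_apply, smul_eq_mul]
  refine Finset.sum_congr rfl fun i _ => Finset.sum_congr rfl fun j _ => by ring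
end
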